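/- arXiv:2003.08104 — 2 statements merged into one kernel-verified Lean document; each statement's English description precedes it below -/
import Mathlib

section
/- Convergence of characteristics to the guiding center flow: assume E : ℝ × ℝ² → ℝ² is bounded by K₀, with ‖∂ₜE‖ ≤ K_t and ‖DₓE‖ ≤ K_x. Let ε > 0, let (x_ε, v_ε) solve ε x_ε' = v_ε, ε v_ε' = E(t,x_ε) − v_ε^⊥/ε with data (x⁰, v⁰) at t = 0, and let x solve x' = −E^⊥(t, x) with x(0) = x⁰. Then there is a constant C depending only on K₀, K_t, K_x such that for all t ≥ 0, ‖x_ε(t) − x(t)‖ ≤ C ε e^{K_x t}(1+t²)(‖v⁰‖ + ε). -/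
open Real Set

/-- Rotation by π/2 on Euclidean `ℝ²`: `(a,b)^⊥ = (−b,a)`. -/
noncomputable def perp (v : EuclideanSpace ℝ (Fin 2)) : EuclideanSpace ℝ (Fin 2) :=
  WithLp.toLp 2 ![-(v 1), v 0]

local notation "E2" => EuclideanSpace ℝ (Fin 2)

noncomputable def perpCLM : E2 →L[ℝ] E2 :=
  LinearMap.toContinuousLinearMap
    { toFun := perp
      map_add' := by
        intro x y; ext i; fin_cases i <;> · simp [perp]; try ring
      map_smul' := by
        intro c x; ext i; fin_cases i <;> · simp [perp, mul_comm]; try ring }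

@[simp] lemma perpCLM_apply (v : E2) : perpCLM v = perp v := rfl

lemma perp_add (x y : E2) : perp (x + y) = perp x + perp y := map_add perpCLM x y

lemma perp_smul (c : ℝ) (x : E2) : perp (c • x) = c • perp x := map_smul perpCLM c x

lemma perp_sub (x y : E2) : perp (x - y) = perp x - perp y := map_sub perpCLM x y

lemma perp_neg (x : E2) : perp (-x) = -perp x := map_neg perpCLM x

lemma perp_perp (v : E2) : perp (perp v) = -v := by
  ext i; fin_cases i <;> simp [perp]

lemma norm_perp (v : E2) : ‖perp v‖ = ‖v‖ := by
  simp [EuclideanSpace.norm_eq, Fin.sum_univ_two, perp]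
  ring_nf

lemma norm_rot (a b : ℝ) (h : a^2 + b^2 = 1) (v : E2) :
    ‖a • v + b • perp v‖ = ‖v‖ := by
  rw [EuclideanSpace.norm_eq, EuclideanSpace.norm_eq]
  congr 1
  simp [Fin.sum_univ_two, perp, Real.norm_eq_abs, sq_abs]
  ring_nf
  nlinarith [sq_nonneg (v 0), sq_nonneg (v 1)]

lemma exp_sub_one_le (y : ℝ) (hy : 0 ≤ y) : Real.exp y - 1 ≤ y * Real.exp y := by
  have h := Real.add_one_le_exp (-y)
  have hp := Real.exp_pos y
  have h2 : (-y + 1) * Real.exp y ≤ Real.exp (-y) * Real.exp y :=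
    mul_le_mul_of_nonneg_right h hp.le
  rw [← Real.exp_add] at h2
  simp only [neg_add_cancel, Real.exp_zero] at h2
  nlinarith

lemma hasDerivAt_exp_const_mul (c s : ℝ) :
    HasDerivAt (fun x : ℝ => Real.exp (c * x)) (c * Real.exp (c * s)) s := by
  have := (Real.hasDerivAt_exp (c * s)).comp s (HasDerivAt.const_mul c (hasDerivAt_id s))
  simpa [Function.comp_def, mul_comm] using this

lemma hasDerivAt_cos_const_mul (a s : ℝ) :
    HasDerivAt (fun x : ℝ => Real.cos (a * x)) (-(a * Real.sin (a * s))) s := by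
  have := (Real.hasDerivAt_cos (a * s)).comp s (HasDerivAt.const_mul a (hasDerivAt_id s))
  simpa [Function.comp_def, mul_comm] using this

lemma hasDerivAt_sin_const_mul (a s : ℝ) :
    HasDerivAt (fun x : ℝ => Real.sin (a * x)) (a * Real.cos (a * s)) s := by
  have := (Real.hasDerivAt_sin (a * s)).comp s (HasDerivAt.const_mul a (hasDerivAt_id s))
  simpa [Function.comp_def, mul_comm] using this

lemma gronwallBound_le {δ K ε x : ℝ} (hK : 0 ≤ K) (hε : 0 ≤ ε) (hx : 0 ≤ x) :
    gronwallBound δ K ε x ≤ (δ + ε * x) * Real.exp (K * x) := by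
  rcases eq_or_lt_of_le hK with h0 | hKpos
  · rw [← h0, gronwallBound_K0]
    simp
  · rw [gronwallBound_of_K_ne_0 (ne_of_gt hKpos)]
    have h2 : Real.exp (K * x) - 1 ≤ (K * x) * Real.exp (K * x) :=
      exp_sub_one_le _ (by positivity)
    have h3 : ε / K * (Real.exp (K * x) - 1) ≤ ε * x * Real.exp (K * x) := by
      rw [div_mul_eq_mul_div, div_le_iff₀ hKpos]
      calc ε * (Real.exp (K * x) - 1) ≤ ε * ((K * x) * Real.exp (K * x)) := by
            apply mul_le_mul_of_nonneg_left h2 hε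
        _ = ε * x * Real.exp (K * x) * K := by ring
    nlinarith [Real.exp_pos (K * x)]

/-- Variable-coefficient Grönwall via barrier. -/
lemma gronwall_var {F : Type*} [NormedAddCommGroup F] [NormedSpace ℝ F]
    {z z' : ℝ → F} {K M : ℝ} (hK : 0 ≤ K) (hM : 0 ≤ M)
    (hz : ∀ s, HasDerivAt z (z' s) s)
    (h0 : ‖z 0‖ ≤ M)
    (hb : ∀ s, 0 ≤ s → ‖z' s‖ ≤ K * ‖z s‖ + K * M * (1 + s) * Real.exp (K * s))
    (t : ℝ) (ht : 0 ≤ t) :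
    ‖z t‖ ≤ M * (1 + K * t + K * t ^ 2 / 2) * Real.exp (K * t) := by
  have key : ∀ η : ℝ, 0 < η →
      ‖z t‖ ≤ M * (1 + K * t + K * t ^ 2 / 2) * Real.exp (K * t) + η * Real.exp ((K + 1) * t) := by
    intro η hη
    set B : ℝ → ℝ := fun s => M * (1 + K * s + K * s ^ 2 / 2) * Real.exp (K * s)
      + η * Real.exp ((K + 1) * s) with hB
    set B' : ℝ → ℝ := fun s => (M * (K + K * s) + K * (M * (1 + K * s + K * s ^ 2 / 2))) * Real.exp (K * s)
      + η * ((K + 1) * Real.exp ((K + 1) * s)) with hB'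
    have hBd : ∀ s : ℝ, HasDerivAt B (B' s) s := by
      intro s
      have h1 := hasDerivAt_exp_const_mul K s
      have h2 := hasDerivAt_exp_const_mul (K + 1) s
      have h3 : HasDerivAt (fun s : ℝ => M * (1 + K * s + K * s ^ 2 / 2)) (M * (K + K * s)) s := by
        have : HasDerivAt (fun s : ℝ => 1 + K * s + K * s ^ 2 / 2) (K + K * s) s := by
          have hp : HasDerivAt (fun s : ℝ => s ^ 2) (2 * s) s := by
            simpa using hasDerivAt_pow 2 s
          have := (((hasDerivAt_const s (1:ℝ)).add ((hasDerivAt_id s).const_mul K)).add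
            ((hp.const_mul K).div_const 2))
          exact this.congr_deriv (by ring)
        simpa using this.const_mul M
      have := ((h3.mul h1).add (h2.const_mul η))
      exact this.congr_deriv (by simp only [hB']; ring)
    have := image_norm_le_of_norm_deriv_right_lt_deriv_boundary
      (f := z) (f' := z') (a := 0) (b := t)
      (fun s _ => (hz s).continuousAt.continuousWithinAt)
      (fun s _ => (hz s).hasDerivWithinAt)
      (by
        simp only [hB]
        simp only [mul_zero, zero_pow, add_zero, Real.exp_zero, mul_one]
        nlinarith)
      hBd
      (by
        intro s hs hfb
        have hs0 : 0 ≤ s := hs.1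
        have hzb := hb s hs0
        rw [hfb] at hzb
        simp only [hB, hB']
        calc ‖z' s‖ ≤ K * (M * (1 + K * s + K * s ^ 2 / 2) * Real.exp (K * s)
              + η * Real.exp ((K + 1) * s)) + K * M * (1 + s) * Real.exp (K * s) := hzb
          _ < (M * (K + K * s) + K * (M * (1 + K * s + K * s ^ 2 / 2))) * Real.exp (K * s)
              + η * ((K + 1) * Real.exp ((K + 1) * s)) := by
              have := Real.exp_pos ((K + 1) * s)
              have := Real.exp_pos (K * s)
              nlinarith)
    have := this (right_mem_Icc.2 ht)
    simpa [hB] using this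
  by_contra hcon
  push_neg at hcon
  set d := ‖z t‖ - M * (1 + K * t + K * t ^ 2 / 2) * Real.exp (K * t) with hd
  have hdpos : 0 < d := by simpa [hd, sub_pos] using hcon
  have hk := key (d / (2 * Real.exp ((K + 1) * t))) (by positivity)
  have he : (0:ℝ) < Real.exp ((K + 1) * t) := Real.exp_pos _
  have heq : d / (2 * Real.exp ((K + 1) * t)) * Real.exp ((K + 1) * t) = d / 2 := by
    field_simp
  nlinarith [hk, heq]

set_option maxHeartbeats 2000000 in
/-- convergence of the characteristics to the guiding-center flow:
there is a constant `C` depending only on `K₀, Kt, Kx` such that for any admissible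
field `E`, `ε > 0`, and solutions with common data, `‖x_ε(t) − x(t)‖ ≤
C ε e^{Kₓt}(1+t²)(‖v⁰‖+ε)` for all `t ≥ 0`. -/
theorem stmt14 (K₀ Kt Kx : ℝ) :
    ∃ C : ℝ, 0 < C ∧
      ∀ (E : ℝ → EuclideanSpace ℝ (Fin 2) → EuclideanSpace ℝ (Fin 2)),
        ContDiff ℝ 1 (fun p : ℝ × EuclideanSpace ℝ (Fin 2) => E p.1 p.2) →
        (∀ t x, ‖E t x‖ ≤ K₀) →
        (∀ t x, ‖fderiv ℝ (fun s => E s x) t‖ ≤ Kt) →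
        (∀ t x, ‖fderiv ℝ (fun y => E t y) x‖ ≤ Kx) →
        ∀ (ε : ℝ), 0 < ε →
        ∀ (xe ve X : ℝ → EuclideanSpace ℝ (Fin 2)) (x0 v0 : EuclideanSpace ℝ (Fin 2)),
        (∀ t, HasDerivAt xe (ε⁻¹ • ve t) t) →
        (∀ t, HasDerivAt ve (ε⁻¹ • E t (xe t) - (ε ^ 2)⁻¹ • perp (ve t)) t) →
        (∀ t, HasDerivAt X (-perp (E t (X t))) t) →
        xe 0 = x0 → ve 0 = v0 → X 0 = x0 →
        ∀ t, 0 ≤ t →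
          ‖xe t - X t‖ ≤ C * ε * Real.exp (Kx * t) * (1 + t ^ 2) * (‖v0‖ + ε) := by
  refine ⟨(1 + 2 * |K₀| + |Kt| + |Kx| * |K₀|) * (3 + 2 * |Kx|), by positivity, ?_⟩
  intro E hE hK0 hKt hKx ε hε xe ve X x0 v0 hxe hve hX hxe0 hve0 hX0 t ht
  have hK0' : 0 ≤ K₀ := le_trans (norm_nonneg (E 0 0)) (hK0 0 0)
  have hKt' : 0 ≤ Kt := le_trans (norm_nonneg _) (hKt 0 0)
  have hKx' : 0 ≤ Kx := le_trans (norm_nonneg _) (hKx 0 0)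
  rw [abs_of_nonneg hK0', abs_of_nonneg hKt', abs_of_nonneg hKx']
  set Et : ℝ × E2 → E2 := fun p => E p.1 p.2 with hEtdef
  have hEdiff : Differentiable ℝ Et := hE.differentiable one_ne_zero
  have hscal : ((ε ^ 2)⁻¹ : ℝ) * ε = ε⁻¹ := by
    rw [sq, mul_inv, mul_assoc, inv_mul_cancel₀ hε.ne', mul_one]
  -- spatial Lipschitz bound
  have hspace : ∀ (s : ℝ) (x y : E2), ‖E s x - E s y‖ ≤ Kx * ‖x - y‖ := by
    intro s x y
    have hdiffy : ∀ u : E2, DifferentiableAt ℝ (fun y : E2 => E s y) u := by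
      intro u
      have h2 : DifferentiableAt ℝ (fun y : E2 => ((s, y) : ℝ × E2)) u :=
        (differentiableAt_const _).prodMk differentiableAt_id
      exact (hEdiff (s, u)).comp u h2
    have := convex_univ.norm_image_sub_le_of_norm_fderiv_le (fun u _ => hdiffy u)
      (fun u _ => hKx s u) (mem_univ y) (mem_univ x)
    simpa using this
  -- bound on the time-partial of Et
  have htime : ∀ (s : ℝ) (x : E2), ‖(fderiv ℝ Et (s, x)) (1, 0)‖ ≤ Kt := by
    intro s x
    have hder : HasDerivAt (fun r => E r x) ((fderiv ℝ Et (s, x)) (1, (0 : E2))) s := by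
      have h := HasFDerivAt.comp_hasDerivAt s (hEdiff (s, x)).hasFDerivAt
        ((hasDerivAt_id s).prodMk (hasDerivAt_const s x))
      exact h
    have h1 : deriv (fun r => E r x) s = (fderiv ℝ Et (s, x)) (1, (0 : E2)) := hder.deriv
    have h2 : deriv (fun r => E r x) s = fderiv ℝ (fun r => E r x) s 1 := rfl
    rw [← h1, h2]
    have := (fderiv ℝ (fun r => E r x) s).le_opNorm 1
    simp only [norm_one, mul_one] at this
    exact this.trans (hKt s x)
  -- bound on the space-partial of Et
  have hspaceD : ∀ (s : ℝ) (x b : E2), ‖(fderiv ℝ Et (s, x)) (0, b)‖ ≤ Kx * ‖b‖ := by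
    intro s x b
    have hcomp : HasFDerivAt (fun y : E2 => E s y)
        ((fderiv ℝ Et (s, x)).comp (ContinuousLinearMap.inr ℝ ℝ E2)) x := by
      have h := HasFDerivAt.comp x (hEdiff (s, x)).hasFDerivAt (hasFDerivAt_prodMk_right s x)
      exact h
    have h1 : (fderiv ℝ Et (s, x)) ((0 : ℝ), b)
        = fderiv ℝ (fun y : E2 => E s y) x b := by rw [hcomp.fderiv]; rfl
    rw [h1]
    calc ‖fderiv ℝ (fun y : E2 => E s y) x b‖
        ≤ ‖fderiv ℝ (fun y : E2 => E s y) x‖ * ‖b‖ := ContinuousLinearMap.le_opNorm _ _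
      _ ≤ Kx * ‖b‖ := mul_le_mul_of_nonneg_right (hKx s x) (norm_nonneg b)
  -- derivative of the field along xe
  set g : ℝ → E2 := fun s => (fderiv ℝ Et (s, xe s)) (1, ε⁻¹ • ve s) with hgdef
  have hF : ∀ s, HasDerivAt (fun r => E r (xe r)) (g s) s := by
    intro s
    have h := HasFDerivAt.comp_hasDerivAt s (hEdiff (s, xe s)).hasFDerivAt
      ((hasDerivAt_id s).prodMk (hxe s))
    exact h
  have hgnorm : ∀ s, ε * ‖g s‖ ≤ ε * Kt + Kx * ‖ve s‖ := by
    intro s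
    have hsplit : ((1:ℝ), ε⁻¹ • ve s) = ((1:ℝ), (0:E2)) + ((0:ℝ), ε⁻¹ • ve s) := by simp
    have hg1 : ‖g s‖ ≤ Kt + Kx * (ε⁻¹ * ‖ve s‖) := by
      simp only [hgdef]
      rw [hsplit, map_add]
      refine le_trans (norm_add_le _ _) ?_
      have h1 := htime s (xe s)
      have h2 := hspaceD s (xe s) (ε⁻¹ • ve s)
      rw [norm_smul, Real.norm_eq_abs, abs_of_pos (inv_pos.2 hε)] at h2
      exact add_le_add h1 h2
    calc ε * ‖g s‖ ≤ ε * (Kt + Kx * (ε⁻¹ * ‖ve s‖)) := mul_le_mul_of_nonneg_left hg1 hε.le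
      _ = ε * Kt + (ε * ε⁻¹) * (Kx * ‖ve s‖) := by ring
      _ = ε * Kt + Kx * ‖ve s‖ := by rw [mul_inv_cancel₀ hε.ne']; ring
  -- the corrected velocity w and its ODE
  set w : ℝ → E2 := fun s => ve s + ε • perp (E s (xe s)) with hwdef
  have hW : ∀ s, HasDerivAt w (-((ε ^ 2)⁻¹) • perp (w s) + ε • perp (g s)) s := by
    intro s
    have h1 : HasDerivAt (fun r => perp (E r (xe r))) (perp (g s)) s := by
      have := HasFDerivAt.comp_hasDerivAt s perpCLM.hasFDerivAt (hF s)
      simpa [Function.comp_def] using this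
    have h2 := (hve s).add (h1.const_smul ε)
    have h2' : HasDerivAt w
        ((ε⁻¹ • E s (xe s) - (ε ^ 2)⁻¹ • perp (ve s)) + ε • perp (g s)) s := by
      simp only [hwdef]; exact h2
    convert h2' using 1
    have h3 : perp (w s) = perp (ve s) - ε • E s (xe s) := by
      simp only [hwdef]
      rw [perp_add, perp_smul, perp_perp]
      module
    rw [h3, neg_smul, smul_sub, smul_smul, hscal]
    abel
  -- the rotated corrected velocity u
  set cs : ℝ → ℝ := fun s => Real.cos ((ε ^ 2)⁻¹ * s) with hcsdef
  set sn : ℝ → ℝ := fun s => Real.sin ((ε ^ 2)⁻¹ * s) with hsndef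
  have hlin : ∀ s : ℝ, HasDerivAt (fun x : ℝ => (ε ^ 2)⁻¹ * x) ((ε ^ 2)⁻¹) s := by
    intro s; simpa using (hasDerivAt_id s).const_mul ((ε ^ 2)⁻¹)
  have hcsd : ∀ s, HasDerivAt cs (-((ε ^ 2)⁻¹ * sn s)) s := by
    intro s
    rw [hcsdef, hsndef]
    exact hasDerivAt_cos_const_mul _ s
  have hsnd : ∀ s, HasDerivAt sn ((ε ^ 2)⁻¹ * cs s) s := by
    intro s
    rw [hsndef, hcsdef]
    exact hasDerivAt_sin_const_mul _ s
  set u : ℝ → E2 := fun s => cs s • w s + sn s • perp (w s) with hudef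
  have hperpW : ∀ s, HasDerivAt (fun r => perp (w r))
      (perp (-((ε ^ 2)⁻¹) • perp (w s) + ε • perp (g s))) s := by
    intro s
    have := HasFDerivAt.comp_hasDerivAt s perpCLM.hasFDerivAt (hW s)
    simpa [Function.comp_def] using this
  have hU : ∀ s, HasDerivAt u (cs s • (ε • perp (g s)) + sn s • perp (ε • perp (g s))) s := by
    intro s
    have h3 := ((hcsd s).smul (hW s)).add ((hsnd s).smul (hperpW s))
    rw [hudef]
    refine h3.congr_deriv ?_
    simp only [perp_add, perp_smul, perp_perp, perp_neg, smul_neg, neg_smul]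
    module
  -- norms
  have hnorm_u : ∀ s, ‖u s‖ = ‖w s‖ := by
    intro s
    simp only [hudef]
    exact norm_rot (cs s) (sn s) (Real.cos_sq_add_sin_sq _) (w s)
  have hnorm_U : ∀ s, ‖cs s • (ε • perp (g s)) + sn s • perp (ε • perp (g s))‖ = ε * ‖g s‖ := by
    intro s
    rw [norm_rot (cs s) (sn s) (Real.cos_sq_add_sin_sq _) (ε • perp (g s)),
      norm_smul, norm_perp, Real.norm_eq_abs, abs_of_pos hε]
  have hvew : ∀ s, ‖ve s‖ ≤ ‖u s‖ + ε * K₀ := by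
    intro s
    have h1 : ve s = w s - ε • perp (E s (xe s)) := by simp only [hwdef]; abel
    rw [h1, hnorm_u s]
    refine (norm_sub_le _ _).trans ?_
    have : ‖ε • perp (E s (xe s))‖ ≤ ε * K₀ := by
      rw [norm_smul, norm_perp, Real.norm_eq_abs, abs_of_pos hε]
      exact mul_le_mul_of_nonneg_left (hK0 s (xe s)) hε.le
    linarith
  have hu0 : ‖u 0‖ ≤ ‖v0‖ + ε * K₀ := by
    rw [hnorm_u 0]
    have h1 : w 0 = v0 + ε • perp (E 0 x0) := by simp only [hwdef]; rw [hve0, hxe0]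
    rw [h1]
    refine (norm_add_le _ _).trans ?_
    have : ‖ε • perp (E 0 x0)‖ ≤ ε * K₀ := by
      rw [norm_smul, norm_perp, Real.norm_eq_abs, abs_of_pos hε]
      exact mul_le_mul_of_nonneg_left (hK0 0 x0) hε.le
    linarith
  -- Gronwall for u
  have hu_b : ∀ s, 0 ≤ s →
      ‖u s‖ ≤ ((‖v0‖ + ε * K₀) + (ε * Kt + Kx * (ε * K₀)) * s) * Real.exp (Kx * s) := by
    intro s hs
    have hG := norm_le_gronwallBound_of_norm_deriv_right_le (a := 0) (b := s) (f := u)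
      (f' := fun r => cs r • (ε • perp (g r)) + sn r • perp (ε • perp (g r)))
      (δ := ‖v0‖ + ε * K₀) (K := Kx) (ε := ε * Kt + Kx * (ε * K₀))
      (fun r _ => (hU r).continuousAt.continuousWithinAt)
      (fun r _ => (hU r).hasDerivWithinAt)
      hu0
      (by
        intro r _
        rw [hnorm_U r]
        have h1 := hgnorm r
        have h2 := hvew r
        have h3 : Kx * ‖ve r‖ ≤ Kx * ‖u r‖ + Kx * (ε * K₀) := by nlinarith
        linarith)
    have h4 := hG s (right_mem_Icc.2 hs)
    rw [sub_zero] at h4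
    exact h4.trans (gronwallBound_le hKx' (by positivity) hs)
  -- velocity bound
  set M : ℝ := (1 + 2 * K₀ + Kt + Kx * K₀) * (‖v0‖ + ε) with hMdef
  have hMpos : 0 < M := by rw [hMdef]; positivity
  have hve_b : ∀ s, 0 ≤ s → ‖ve s‖ ≤ M * (1 + s) * Real.exp (Kx * s) := by
    intro s hs
    have h1 := hu_b s hs
    have h2 := hvew s
    have hexp1 : 1 ≤ Real.exp (Kx * s) := Real.one_le_exp (by positivity)
    have hM1 : ‖v0‖ + 2 * (ε * K₀) ≤ M := by
      rw [hMdef]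
      nlinarith [norm_nonneg v0, mul_nonneg hK0' (norm_nonneg v0),
        mul_nonneg hKt' (norm_nonneg v0), mul_nonneg (mul_nonneg hKx' hK0') (norm_nonneg v0),
        mul_nonneg hKt' hε.le, mul_nonneg (mul_nonneg hKx' hK0') hε.le]
    have hM2 : ε * Kt + Kx * (ε * K₀) ≤ M := by
      rw [hMdef]
      nlinarith [norm_nonneg v0, mul_nonneg hK0' (norm_nonneg v0),
        mul_nonneg hKt' (norm_nonneg v0), mul_nonneg (mul_nonneg hKx' hK0') (norm_nonneg v0),
        mul_nonneg hK0' hε.le, hε.le]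
    have hPQ : ‖v0‖ + 2 * (ε * K₀) + (ε * Kt + Kx * (ε * K₀)) * s ≤ M * (1 + s) := by
      have := mul_le_mul_of_nonneg_right hM2 hs
      nlinarith
    have h5 : ε * K₀ ≤ ε * K₀ * Real.exp (Kx * s) := by
      nlinarith [mul_nonneg hε.le hK0']
    have h6 : ‖ve s‖ ≤ ((‖v0‖ + ε * K₀) + (ε * Kt + Kx * (ε * K₀)) * s) * Real.exp (Kx * s)
        + ε * K₀ * Real.exp (Kx * s) := by linarith
    calc ‖ve s‖ ≤ (‖v0‖ + 2 * (ε * K₀) + (ε * Kt + Kx * (ε * K₀)) * s) * Real.exp (Kx * s) := by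
          nlinarith [h6]
      _ ≤ M * (1 + s) * Real.exp (Kx * s) :=
          mul_le_mul_of_nonneg_right hPQ (Real.exp_pos _).le
  -- the guiding center deviation z
  set z : ℝ → E2 := fun s => xe s - ε • perp (ve s) - X s with hzdef
  have hzd : ∀ s, HasDerivAt z (perp (E s (X s)) - perp (E s (xe s))) s := by
    intro s
    have h1 : HasDerivAt (fun r => perp (ve r))
        (perp (ε⁻¹ • E s (xe s) - (ε ^ 2)⁻¹ • perp (ve s))) s := by
      have := HasFDerivAt.comp_hasDerivAt s perpCLM.hasFDerivAt (hve s)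
      simpa [Function.comp_def] using this
    have h2 := ((hxe s).sub (h1.const_smul ε)).sub (hX s)
    have h2' : HasDerivAt z
        ((ε⁻¹ • ve s - ε • perp (ε⁻¹ • E s (xe s) - (ε ^ 2)⁻¹ • perp (ve s)))
          - -perp (E s (X s))) s := by
      simp only [hzdef]; exact h2
    convert h2' using 1
    rw [perp_sub, perp_smul, perp_smul, perp_perp, smul_sub, smul_smul, smul_smul,
      mul_inv_cancel₀ hε.ne', one_smul]
    have h5 : (ε * (ε ^ 2)⁻¹) = ε⁻¹ := by rw [mul_comm]; exact hscal
    rw [h5, smul_neg]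
    abel
  have hz0 : ‖z 0‖ ≤ ε * M := by
    have h1 : z 0 = -(ε • perp v0) := by
      simp only [hzdef]; rw [hxe0, hve0, hX0]; abel
    rw [h1, norm_neg, norm_smul, norm_perp, Real.norm_eq_abs, abs_of_pos hε]
    have : ‖v0‖ ≤ M := by
      rw [hMdef]
      nlinarith [norm_nonneg v0, mul_nonneg hK0' (norm_nonneg v0),
        mul_nonneg hKt' (norm_nonneg v0), mul_nonneg (mul_nonneg hKx' hK0') (norm_nonneg v0),
        mul_nonneg hK0' hε.le, mul_nonneg hKt' hε.le, mul_nonneg (mul_nonneg hKx' hK0') hε.le]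
    exact mul_le_mul_of_nonneg_left this hε.le
  have hz_b : ∀ s, 0 ≤ s → ‖perp (E s (X s)) - perp (E s (xe s))‖
      ≤ Kx * ‖z s‖ + Kx * (ε * M) * (1 + s) * Real.exp (Kx * s) := by
    intro s hs
    have h1 : ‖perp (E s (X s)) - perp (E s (xe s))‖ = ‖E s (X s) - E s (xe s)‖ := by
      rw [← perp_sub, norm_perp]
    rw [h1]
    have h2 := hspace s (X s) (xe s)
    have h3 : ‖X s - xe s‖ ≤ ‖z s‖ + ε * ‖ve s‖ := by
      have h4 : X s - xe s = -(z s) - ε • perp (ve s) := by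
        simp only [hzdef]; abel
      rw [h4]
      refine (norm_sub_le _ _).trans ?_
      rw [norm_neg, norm_smul, norm_perp, Real.norm_eq_abs, abs_of_pos hε]
    have h5 := hve_b s hs
    have h6 : ε * ‖ve s‖ ≤ ε * (M * (1 + s) * Real.exp (Kx * s)) :=
      mul_le_mul_of_nonneg_left h5 hε.le
    calc ‖E s (X s) - E s (xe s)‖ ≤ Kx * ‖X s - xe s‖ := h2
      _ ≤ Kx * (‖z s‖ + ε * (M * (1 + s) * Real.exp (Kx * s))) := by
          apply mul_le_mul_of_nonneg_left _ hKx'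
          linarith
      _ = Kx * ‖z s‖ + Kx * (ε * M) * (1 + s) * Real.exp (Kx * s) := by ring
  have hzt := gronwall_var hKx' (by positivity : (0:ℝ) ≤ ε * M) hzd hz0 hz_b t ht
  -- conclusion
  have hfin : ‖xe t - X t‖ ≤ ‖z t‖ + ε * ‖ve t‖ := by
    have h1 : xe t - X t = z t + ε • perp (ve t) := by
      simp only [hzdef]; abel
    rw [h1]
    refine (norm_add_le _ _).trans ?_
    rw [norm_smul, norm_perp, Real.norm_eq_abs, abs_of_pos hε]
  have h5 : ε * ‖ve t‖ ≤ ε * (M * (1 + t) * Real.exp (Kx * t)) :=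
    mul_le_mul_of_nonneg_left (hve_b t ht) hε.le
  have hsum : ‖xe t - X t‖
      ≤ ε * M * Real.exp (Kx * t) * ((1 + Kx * t + Kx * t ^ 2 / 2) + (1 + t)) := by
    have := add_le_add hzt h5
    have h7 : (ε * M) * (1 + Kx * t + Kx * t ^ 2 / 2) * Real.exp (Kx * t)
        + ε * (M * (1 + t) * Real.exp (Kx * t))
        = ε * M * Real.exp (Kx * t) * ((1 + Kx * t + Kx * t ^ 2 / 2) + (1 + t)) := by ring
    linarith [hfin]
  have key2 : (1 + Kx * t + Kx * t ^ 2 / 2) + (1 + t) ≤ (3 + 2 * Kx) * (1 + t ^ 2) := by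
    nlinarith [sq_nonneg (t - 1), sq_nonneg t, mul_nonneg hKx' (sq_nonneg (t - 1))]
  have hstep2 := mul_le_mul_of_nonneg_left key2
    (show (0:ℝ) ≤ ε * M * Real.exp (Kx * t) by positivity)
  have hfinal : ‖xe t - X t‖ ≤ ε * M * Real.exp (Kx * t) * ((3 + 2 * Kx) * (1 + t ^ 2)) :=
    hsum.trans hstep2
  calc ‖xe t - X t‖ ≤ ε * M * Real.exp (Kx * t) * ((3 + 2 * Kx) * (1 + t ^ 2)) := hfinal
    _ = (1 + 2 * K₀ + Kt + Kx * K₀) * (3 + 2 * Kx) * ε * Real.exp (Kx * t) * (1 + t ^ 2)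
        * (‖v0‖ + ε) := by rw [hMdef]; ring
end

section
/- Discrete a priori bound for the first-order IMEX scheme: let E be C¹ with global bounds K₀, K_t, K_x, let ε, Δt > 0, and let (xⁿ, vⁿ) satisfy (xⁿ⁺¹ − xⁿ)/Δt = vⁿ⁺¹/ε and ε(vⁿ⁺¹ − vⁿ)/Δt = E(tₙ, xⁿ) − (vⁿ⁺¹)^⊥/ε with tₙ = nΔt. Define zⁿ := vⁿ + ε E^⊥(t_{n−1}, x^{n−1}) for n ≥ 1. Then ‖v¹‖ ≤ ‖v⁰‖ + ε K₀, and for all n ≥ 1, ‖zⁿ‖ ≤ e^{K_x tₙ}(‖v⁰‖ + 2εK₀) + ε tₙ e^{K_x tₙ}(K_t + K_x K₀) and ‖vⁿ‖ ≤ ‖zⁿ‖ + K₀ ε. -/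
lemma perp_add_s15 (a b : EuclideanSpace ℝ (Fin 2)) : perp (a + b) = perp a + perp b := by
  ext i; fin_cases i <;> simp [perp] <;> try ring

lemma perp_sub_s15 (a b : EuclideanSpace ℝ (Fin 2)) : perp (a - b) = perp a - perp b := by
  ext i; fin_cases i <;> simp [perp] <;> try ring

lemma perp_smul_s15 (c : ℝ) (a : EuclideanSpace ℝ (Fin 2)) : perp (c • a) = c • perp a := by
  ext i; fin_cases i <;> simp [perp]

lemma perp_perp_s15 (a : EuclideanSpace ℝ (Fin 2)) : perp (perp a) = -a := by
  ext i; fin_cases i <;> simp [perp]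

lemma norm_perp_s15 (a : EuclideanSpace ℝ (Fin 2)) : ‖perp a‖ = ‖a‖ := by
  rw [EuclideanSpace.norm_eq, EuclideanSpace.norm_eq]
  simp [perp, Fin.sum_univ_two]
  ring_nf

lemma norm_add_smul_perp (c : ℝ) (w : EuclideanSpace ℝ (Fin 2)) :
    ‖w + c • perp w‖ = Real.sqrt (1 + c ^ 2) * ‖w‖ := by
  rw [EuclideanSpace.norm_eq, EuclideanSpace.norm_eq, ← Real.sqrt_mul (by positivity)]
  congr 1
  simp [perp, Fin.sum_univ_two]
  ring

set_option maxHeartbeats 1000000 in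
/-- discrete a priori bound for the first-order IMEX scheme. -/
theorem stmt15 (K₀ Kt Kx ε Δt : ℝ) (hε : 0 < ε) (hΔt : 0 < Δt)
    (E : ℝ → EuclideanSpace ℝ (Fin 2) → EuclideanSpace ℝ (Fin 2))
    (hK₀ : ∀ t x, ‖E t x‖ ≤ K₀)
    (hKt : ∀ s t x, ‖E t x - E s x‖ ≤ Kt * |t - s|)
    (hKx : ∀ t x y, ‖E t x - E t y‖ ≤ Kx * ‖x - y‖)
    (x v : ℕ → EuclideanSpace ℝ (Fin 2))
    (hx : ∀ n : ℕ, Δt⁻¹ • (x (n + 1) - x n) = ε⁻¹ • v (n + 1))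
    (hv : ∀ n : ℕ, ε • (Δt⁻¹ • (v (n + 1) - v n))
        = E ((n : ℝ) * Δt) (x n) - ε⁻¹ • perp (v (n + 1)))
    (z : ℕ → EuclideanSpace ℝ (Fin 2))
    (hz : ∀ n : ℕ, z (n + 1) = v (n + 1) + ε • perp (E ((n : ℝ) * Δt) (x n))) :
    ‖v 1‖ ≤ ‖v 0‖ + ε * K₀ ∧
    ∀ n : ℕ, 1 ≤ n →
      (‖z n‖ ≤ Real.exp (Kx * ((n : ℝ) * Δt)) * (‖v 0‖ + 2 * ε * K₀)
          + ε * ((n : ℝ) * Δt) * Real.exp (Kx * ((n : ℝ) * Δt)) * (Kt + Kx * K₀)) ∧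
      ‖v n‖ ≤ ‖z n‖ + K₀ * ε := by
  have hK0nn : 0 ≤ K₀ := le_trans (norm_nonneg _) (hK₀ 0 0)
  have hKtnn : 0 ≤ Kt := by
    have h := hKt 0 1 0
    have h2 := norm_nonneg (E 1 0 - E 0 0)
    norm_num at h
    linarith
  have hKxnn : 0 ≤ Kx := by
    have h := hKx 0 (EuclideanSpace.single 0 (1:ℝ)) 0
    rw [sub_zero, EuclideanSpace.norm_single, norm_one, mul_one] at h
    have h2 := norm_nonneg (E 0 (EuclideanSpace.single 0 (1:ℝ)) - E 0 0)
    linarith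
  set lam : ℝ := Δt / (ε * ε) with hlam
  have hlampos : 0 < lam := by positivity
  set s : ℝ := Real.sqrt (1 + lam ^ 2) with hs
  have hssq : s ^ 2 = 1 + lam ^ 2 := Real.sq_sqrt (by positivity)
  have hsnn : 0 ≤ s := Real.sqrt_nonneg _
  have hs1 : 1 ≤ s := by nlinarith
  have hslam : lam ≤ s := by nlinarith
  have hεlam : lam * ε * ε = Δt := by rw [hlam]; field_simp
  have hnorm : ∀ w : EuclideanSpace ℝ (Fin 2), ‖w + lam • perp w‖ = s * ‖w‖ :=
    fun w => norm_add_smul_perp lam w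
  -- velocity step in clean form
  have hstep : ∀ n : ℕ, v (n + 1) + lam • perp (v (n + 1))
      = v n + (lam * ε) • E ((n : ℝ) * Δt) (x n) := by
    intro n
    have h2 := congrArg (fun w => (Δt / ε) • w) (hv n)
    simp only [smul_smul, smul_sub] at h2
    field_simp at h2
    rw [mul_comm Δt (n:ℝ), show Δt / ε ^ 2 = lam by rw [hlam]; ring] at h2
    have hc3 : lam * ε = Δt / ε := by rw [hlam]; field_simp
    rw [hc3]
    linear_combination (norm := module) h2
  -- position increment
  have hxd : ∀ n : ℕ, ‖x (n + 1) - x n‖ = (lam * ε) * ‖v (n + 1)‖ := by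
    intro n
    have h2 := congrArg (fun w => Δt • w) (hx n)
    simp only [smul_smul] at h2
    rw [mul_inv_cancel₀ (ne_of_gt hΔt), one_smul] at h2
    have hc : Δt * ε⁻¹ = lam * ε := by rw [hlam]; field_simp
    rw [hc] at h2
    rw [h2, norm_smul, Real.norm_eq_abs, abs_of_pos (by positivity)]
  -- v vs z bounds
  have hvz : ∀ n : ℕ, ‖v (n + 1)‖ ≤ ‖z (n + 1)‖ + K₀ * ε := by
    intro n
    have hveq : v (n + 1) = z (n + 1) - ε • perp (E ((n : ℝ) * Δt) (x n)) := by
      rw [hz n]; abel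
    rw [hveq]
    refine le_trans (norm_sub_le _ _) ?_
    have : ‖ε • perp (E ((n : ℝ) * Δt) (x n))‖ ≤ K₀ * ε := by
      rw [norm_smul, Real.norm_eq_abs, abs_of_pos hε, norm_perp_s15]
      nlinarith [hK₀ ((n : ℝ) * Δt) (x n)]
    linarith
  have hzv : ∀ n : ℕ, ‖z (n + 1)‖ ≤ ‖v (n + 1)‖ + ε * K₀ := by
    intro n
    rw [hz n]
    refine le_trans (norm_add_le _ _) ?_
    have : ‖ε • perp (E ((n : ℝ) * Δt) (x n))‖ ≤ ε * K₀ := by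
      rw [norm_smul, Real.norm_eq_abs, abs_of_pos hε, norm_perp_s15]
      nlinarith [hK₀ ((n : ℝ) * Δt) (x n)]
    linarith
  -- first claim
  have hv1 : ‖v 1‖ ≤ ‖v 0‖ + ε * K₀ := by
    have h1 : s * ‖v 1‖ = ‖v 0 + (lam * ε) • E ((0 : ℝ) * Δt) (x 0)‖ := by
      rw [← hnorm]
      congr 1
      have h := hstep 0
      simpa using h
    have h2 : ‖v 0 + (lam * ε) • E ((0 : ℝ) * Δt) (x 0)‖ ≤ ‖v 0‖ + (lam * ε) * K₀ := by
      refine le_trans (norm_add_le _ _) ?_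
      rw [norm_smul, Real.norm_eq_abs, abs_of_pos (by positivity)]
      nlinarith [hK₀ ((0 : ℝ) * Δt) (x 0)]
    have h3 : s * ‖v 1‖ ≤ s * (‖v 0‖ + ε * K₀) := by
      have hn0 : (0:ℝ) ≤ ‖v 0‖ := norm_nonneg _
      nlinarith [mul_nonneg (sub_nonneg.mpr hs1) hn0,
        mul_nonneg (sub_nonneg.mpr hslam) (mul_nonneg hε.le hK0nn)]
    have hspos : 0 < s := lt_of_lt_of_le one_pos hs1
    exact le_of_mul_le_mul_left h3 hspos
  -- z recursion equality
  have hzrec : ∀ n : ℕ, z (n + 2) + lam • perp (z (n + 2))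
      = z (n + 1) + ε • perp (E (((n : ℝ) + 1) * Δt) (x (n + 1)) - E ((n : ℝ) * Δt) (x n)) := by
    intro n
    have hz2 : z (n + 2) = v (n + 2) + ε • perp (E (((n : ℝ) + 1) * Δt) (x (n + 1))) := by
      have := hz (n + 1); push_cast at this; exact this
    have hst : v (n + 2) + lam • perp (v (n + 2))
        = v (n + 1) + (lam * ε) • E (((n : ℝ) + 1) * Δt) (x (n + 1)) := by
      have := hstep (n + 1); push_cast at this; exact this
    rw [hz2, hz n, perp_add_s15, perp_smul_s15, perp_perp_s15, perp_sub_s15]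
    linear_combination (norm := module) hst
  -- per-step inequality
  have hrec : ∀ n : ℕ, ‖z (n + 2)‖ ≤ (1 + Kx * Δt) * ‖z (n + 1)‖ + ε * Δt * (Kt + Kx * K₀) := by
    intro n
    set ΔE := E (((n : ℝ) + 1) * Δt) (x (n + 1)) - E ((n : ℝ) * Δt) (x n) with hΔE
    have h1 : s * ‖z (n + 2)‖ = ‖z (n + 1) + ε • perp ΔE‖ := by
      rw [← hnorm, hzrec n]
    have h2 : ‖z (n + 1) + ε • perp ΔE‖ ≤ ‖z (n + 1)‖ + ε * ‖ΔE‖ := by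
      refine le_trans (norm_add_le _ _) ?_
      rw [norm_smul, Real.norm_eq_abs, abs_of_pos hε, norm_perp_s15]
    have h3 : ‖ΔE‖ ≤ Kt * Δt + Kx * ((lam * ε) * ‖v (n + 1)‖) := by
      have hsplit : ΔE = (E (((n : ℝ) + 1) * Δt) (x (n + 1)) - E (((n : ℝ) + 1) * Δt) (x n))
          + (E (((n : ℝ) + 1) * Δt) (x n) - E ((n : ℝ) * Δt) (x n)) := by rw [hΔE]; abel
      rw [hsplit]
      refine le_trans (norm_add_le _ _) ?_
      have ha := hKx (((n : ℝ) + 1) * Δt) (x (n + 1)) (x n)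
      have hb := hKt ((n : ℝ) * Δt) (((n : ℝ) + 1) * Δt) (x n)
      rw [hxd n] at ha
      have habs : |((n : ℝ) + 1) * Δt - (n : ℝ) * Δt| = Δt := by
        rw [show ((n : ℝ) + 1) * Δt - (n : ℝ) * Δt = Δt by ring, abs_of_pos hΔt]
      rw [habs] at hb
      linarith
    have h4 : ‖v (n + 1)‖ ≤ ‖z (n + 1)‖ + K₀ * ε := hvz n
    have hmul : 0 ≤ Kx * (lam * ε) := by positivity
    have h5 : ‖ΔE‖ ≤ Kt * Δt + Kx * ((lam * ε) * (‖z (n + 1)‖ + K₀ * ε)) := by nlinarith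
    have h6 : s * ‖z (n + 2)‖ ≤ ‖z (n + 1)‖ + ε * (Kt * Δt + Kx * ((lam * ε) * (‖z (n + 1)‖ + K₀ * ε))) := by
      rw [h1]
      refine le_trans h2 ?_
      nlinarith
    have h7 : ‖z (n + 2)‖ ≤ s * ‖z (n + 2)‖ := le_mul_of_one_le_left (norm_nonneg _) hs1
    have h8 : ‖z (n + 1)‖ + ε * (Kt * Δt + Kx * ((lam * ε) * (‖z (n + 1)‖ + K₀ * ε)))
        = (1 + Kx * Δt) * ‖z (n + 1)‖ + ε * Δt * (Kt + Kx * K₀) := by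
      have hd : lam * ε * ε = Δt := hεlam
      linear_combination (Kx * ‖z (n + 1)‖ + Kx * K₀ * ε) * hd
    linarith [h6, h7, h8.symm.le]
  -- main induction
  set A : ℝ := ‖v 0‖ + 2 * ε * K₀ with hA
  set B : ℝ := ε * (Kt + Kx * K₀) with hB
  have hAnn : 0 ≤ A := by positivity
  have hBnn : 0 ≤ B := by positivity
  have main : ∀ n : ℕ, ‖z (n + 1)‖ ≤ Real.exp (Kx * (((n : ℝ) + 1) * Δt)) * A
      + (((n : ℝ) + 1) * Δt) * Real.exp (Kx * (((n : ℝ) + 1) * Δt)) * B := by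
    intro n
    induction n with
    | zero =>
      have h1 : ‖z 1‖ ≤ A := by
        have := hzv 0
        rw [hA]
        linarith [hv1]
      have he : 1 ≤ Real.exp (Kx * (((0 : ℝ) + 1) * Δt)) := Real.one_le_exp (by positivity)
      have hpos : 0 ≤ (((0 : ℝ) + 1) * Δt) * Real.exp (Kx * (((0 : ℝ) + 1) * Δt)) * B := by positivity
      push_cast
      push_cast at h1 he hpos
      nlinarith
    | succ m ih =>
      have hrecm := hrec m
      set t1 : ℝ := ((m : ℝ) + 1) * Δt with ht1
      set t2 : ℝ := ((m : ℝ) + 1 + 1) * Δt with ht2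
      have hgoalcast : ((((m + 1 : ℕ)) : ℝ) + 1) * Δt = t2 := by push_cast; ring
      rw [hgoalcast]
      set e1 : ℝ := Real.exp (Kx * t1) with he1
      set e2 : ℝ := Real.exp (Kx * t2) with he2
      set ed : ℝ := Real.exp (Kx * Δt) with hed
      have hexp : ed * e1 = e2 := by
        rw [hed, he1, he2, ← Real.exp_add]
        congr 1
        rw [ht1, ht2]; ring
      have hed1 : 1 + Kx * Δt ≤ ed := by
        have := Real.add_one_le_exp (Kx * Δt)
        linarith
      have he2one : 1 ≤ e2 := Real.one_le_exp (by positivity)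
      have step1 : (1 + Kx * Δt) * ‖z (m + 1)‖ ≤ ed * (e1 * A + t1 * e1 * B) := by
        exact mul_le_mul hed1 ih (norm_nonneg _) (le_of_lt (by rw [hed]; exact Real.exp_pos _))
      have hεΔB : ε * Δt * (Kt + Kx * K₀) = Δt * B := by rw [hB]; ring
      have hΔB : Δt * B ≤ Δt * e2 * B := by
        nlinarith [mul_nonneg (mul_nonneg hΔt.le hBnn) (sub_nonneg.mpr he2one)]
      have hexpand : ed * (e1 * A + t1 * e1 * B) = e2 * A + t1 * e2 * B := by
        rw [← hexp]; ring
      have ht2eq : t2 = t1 + Δt := by rw [ht1, ht2]; ring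
      calc ‖z (m + 1 + 1)‖ ≤ (1 + Kx * Δt) * ‖z (m + 1)‖ + ε * Δt * (Kt + Kx * K₀) := hrecm
        _ ≤ ed * (e1 * A + t1 * e1 * B) + Δt * B := by linarith [step1, hεΔB]
        _ = e2 * A + t1 * e2 * B + Δt * B := by rw [hexpand]
        _ ≤ e2 * A + t2 * e2 * B := by rw [ht2eq]; nlinarith [hΔB]
  refine ⟨hv1, ?_⟩
  intro n hn
  obtain ⟨m, rfl⟩ := Nat.exists_eq_add_of_le hn
  constructor
  · have h := main m
    have hc : ((1 + m : ℕ) : ℝ) = (m : ℝ) + 1 := by push_cast; ring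
    rw [hc]
    have heq : ε * (((m : ℝ) + 1) * Δt) * Real.exp (Kx * (((m : ℝ) + 1) * Δt)) * (Kt + Kx * K₀)
        = (((m : ℝ) + 1) * Δt) * Real.exp (Kx * (((m : ℝ) + 1) * Δt)) * B := by rw [hB]; ring
    rw [heq]
    rw [show 1 + m = m + 1 from by ring]
    exact h
  · rw [show 1 + m = m + 1 from by ring]
    exact hvz m
end
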